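/- If R₂ = 1 (equivalently Λβ₂a₂(γ+μ+pδ₂) = μ(μ+a₂)(μ+d₂+α₂)(p+γ+μ)), then k₂' = β₂((μ+a₂)(μ+d₂+α₂)(γ+μ+(p+μ)δ₂) - Λβ₂a₂δ₂) > 0. Consequently, when R₂ ≤ 1 the quadratic k₁'I² + k₂'I + k₃' = 0 has no positive root, and the model has no mutant dominant equilibrium. -/
import Mathlib

lemma k2_pos (Λ β₂ a₂ μ γ p d₂ α₂ δ₂ : ℝ)
    (hΛ : 0 < Λ) (hβ₂ : 0 < β₂) (ha₂ : 0 < a₂) (hμ : 0 < μ) (hγ : 0 < γ)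
    (hp : 0 < p) (hd₂ : 0 < d₂) (hα₂ : 0 < α₂) (hδ₂0 : 0 < δ₂)
    (h : Λ * β₂ * a₂ * (γ + μ + p * δ₂) ≤ μ * (μ + a₂) * (μ + d₂ + α₂) * (p + γ + μ)) :
    0 < β₂ * ((μ + a₂) * (μ + d₂ + α₂) * (γ + μ + (p + μ) * δ₂) - Λ * β₂ * a₂ * δ₂) := by
  have hD : 0 < (μ + a₂) * (μ + d₂ + α₂) := by positivity
  have h2 : δ₂ * (Λ * β₂ * a₂ * (γ + μ + p * δ₂)) ≤
      δ₂ * (μ * (μ + a₂) * (μ + d₂ + α₂) * (p + γ + μ)) :=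
    mul_le_mul_of_nonneg_left h hδ₂0.le
  have h3 : μ * δ₂ * (p + γ + μ) < (γ + μ + (p + μ) * δ₂) * (γ + μ + p * δ₂) := by
    nlinarith [sq_nonneg (γ + μ), mul_pos hp (mul_pos hδ₂0 hγ),
      mul_pos (mul_pos hγ hμ) hδ₂0, mul_pos hp (mul_pos hp (mul_pos hδ₂0 hδ₂0)),
      mul_pos hμ (mul_pos hp (mul_pos hδ₂0 hδ₂0))]
  have h4 : (μ + a₂) * (μ + d₂ + α₂) * (μ * δ₂ * (p + γ + μ)) <
      (μ + a₂) * (μ + d₂ + α₂) * ((γ + μ + (p + μ) * δ₂) * (γ + μ + p * δ₂)) :=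
    mul_lt_mul_of_pos_left h3 hD
  have key : Λ * β₂ * a₂ * δ₂ * (γ + μ + p * δ₂) <
      (μ + a₂) * (μ + d₂ + α₂) * (γ + μ + (p + μ) * δ₂) * (γ + μ + p * δ₂) := by
    linarith [h2, h4]
  have hpos : 0 < γ + μ + p * δ₂ := by positivity
  have : Λ * β₂ * a₂ * δ₂ < (μ + a₂) * (μ + d₂ + α₂) * (γ + μ + (p + μ) * δ₂) :=
    lt_of_mul_lt_mul_right key hpos.le
  nlinarith

/-- If `R₂ = 1` then `k₂' > 0`; consequently for `R₂ ≤ 1` the quadratic has no positive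
    root, i.e., there is no mutant dominant equilibrium. -/
theorem no_mutant_equilibrium (Λ β₂ a₂ μ γ p d₂ α₂ δ₂ : ℝ)
    (hΛ : 0 < Λ) (hβ₂ : 0 < β₂) (ha₂ : 0 < a₂) (hμ : 0 < μ) (hγ : 0 < γ)
    (hp : 0 < p) (hd₂ : 0 < d₂) (hα₂ : 0 < α₂) (hδ₂0 : 0 < δ₂) (hδ₂1 : δ₂ ≤ 1)
    (R₂ k₁' k₂' k₃' : ℝ)
    (hR₂ : R₂ = Λ * β₂ * a₂ * (γ + μ + p * δ₂) /
      (μ * (μ + a₂) * (μ + d₂ + α₂) * (p + γ + μ)))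
    (hk₁ : k₁' = β₂^2 * (μ + a₂) * (μ + d₂ + α₂) * δ₂)
    (hk₂ : k₂' = β₂ * ((μ + a₂) * (μ + d₂ + α₂) * (γ + μ + (p + μ) * δ₂) - Λ * β₂ * a₂ * δ₂))
    (hk₃ : k₃' = μ * (μ + a₂) * (μ + d₂ + α₂) * (γ + μ + p) * (1 - R₂)) :
    (R₂ = 1 → 0 < k₂') ∧
    (R₂ ≤ 1 → ∀ x : ℝ, 0 < x → k₁' * x^2 + k₂' * x + k₃' ≠ 0) := by
  have hden : 0 < μ * (μ + a₂) * (μ + d₂ + α₂) * (p + γ + μ) := by positivity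
  have hle : R₂ ≤ 1 → Λ * β₂ * a₂ * (γ + μ + p * δ₂) ≤
      μ * (μ + a₂) * (μ + d₂ + α₂) * (p + γ + μ) := by
    intro h
    rw [hR₂, div_le_one hden] at h
    exact h
  constructor
  · intro h1
    rw [hk₂]
    exact k2_pos Λ β₂ a₂ μ γ p d₂ α₂ δ₂ hΛ hβ₂ ha₂ hμ hγ hp hd₂ hα₂ hδ₂0 (hle h1.le)
  · intro h1 x hx
    have hk2 : 0 < k₂' := by
      rw [hk₂]
      exact k2_pos Λ β₂ a₂ μ γ p d₂ α₂ δ₂ hΛ hβ₂ ha₂ hμ hγ hp hd₂ hα₂ hδ₂0 (hle h1)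
    have hk1 : 0 < k₁' := by rw [hk₁]; positivity
    have hk3 : 0 ≤ k₃' := by
      rw [hk₃]
      have : 0 ≤ 1 - R₂ := by linarith
      positivity
    have : 0 < k₁' * x^2 + k₂' * x + k₃' := by positivity
    linarith
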